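/- Let H₁ and H₂ be real Hilbert spaces, K : H₁ → H₂ a continuous linear operator, f ∈ H₂ nonzero, C_f > 0, C₃ > 0 and θ ∈ (0, 1/2). Let (γ_k, v_k, β_k, p_k)_{k≥1} be a non-terminating Golub–Kahan bidiagonalization (GKB) process for (K, f), and assume min(γ_k, β_k) ≥ C₃·k^{−θ} for all k ≥ 1. Then there exists a constant C₄ > 0 such that for every δ > 0, every f^δ ∈ H₂ with ‖f^δ − f‖ ≤ C_f·δ, every non-terminating GKB process (γ_k^δ, v_k^δ, β_k^δ, p_k^δ)_{k≥1} for (K, f^δ), and every k ≥ 1: |γ_k^δ − γ_k| + ‖v_k^δ − v_k‖ + |β_k^δ − β_k| + ‖p_k^δ − p_k‖ ≤ C₄·k!·δ. -/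

import Mathlib

open ContinuousLinearMap

/-- A non-terminating Golub–Kahan bidiagonalization (GKB) process for `(K, g)`.
Index `j : ℕ` corresponds to the `(j+1)`-st element of the process in the paper
(i.e. `γ 0 = γ₁`, `v 0 = v₁`, etc.). All coefficients are strictly positive. -/
structure GKB {H₁ H₂ : Type*}
    [NormedAddCommGroup H₁] [InnerProductSpace ℝ H₁] [CompleteSpace H₁]
    [NormedAddCommGroup H₂] [InnerProductSpace ℝ H₂] [CompleteSpace H₂]
    (K : H₁ →L[ℝ] H₂) (g : H₂)
    (γ β : ℕ → ℝ) (v : ℕ → H₂) (p : ℕ → H₁) : Prop where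
  γ_pos : ∀ j, 0 < γ j
  β_pos : ∀ j, 0 < β j
  γ_zero : γ 0 = ‖g‖
  v_zero : γ 0 • v 0 = g
  β_zero : β 0 = ‖adjoint K (v 0)‖
  p_zero : β 0 • p 0 = adjoint K (v 0)
  γ_succ : ∀ j, γ (j + 1) = ‖K (p j) - β j • v j‖
  v_succ : ∀ j, γ (j + 1) • v (j + 1) = K (p j) - β j • v j
  β_succ : ∀ j, β (j + 1) = ‖adjoint K (v (j + 1)) - γ (j + 1) • p j‖
  p_succ : ∀ j, β (j + 1) • p (j + 1) = adjoint K (v (j + 1)) - γ (j + 1) • p j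

section Helpers

open ContinuousLinearMap RealInnerProductSpace

/-- Difference of normalized vectors. -/
private lemma unit_diff {E : Type*} [NormedAddCommGroup E] [NormedSpace ℝ E]
    {g g' : E} {a a' : ℝ} {u u' : E} (ha : 0 < a) (ha' : 0 < a')
    (hag : a = ‖g‖) (hag' : a' = ‖g'‖) (hu : a • u = g) (hu' : a' • u' = g') :
    ‖u' - u‖ ≤ 2 * ‖g' - g‖ / a := by
  have hu1 : u = a⁻¹ • g := by rw [← hu, smul_smul, inv_mul_cancel₀ ha.ne', one_smul]
  have hu2 : u' = a'⁻¹ • g' := by rw [← hu', smul_smul, inv_mul_cancel₀ ha'.ne', one_smul]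
  have key : u' - u = a⁻¹ • (g' - g) + (a'⁻¹ - a⁻¹) • g' := by
    rw [hu1, hu2]; rw [smul_sub, sub_smul]; abel
  have h1 : ‖u' - u‖ ≤ a⁻¹ * ‖g' - g‖ + |a'⁻¹ - a⁻¹| * a' := by
    rw [key]
    calc ‖a⁻¹ • (g' - g) + (a'⁻¹ - a⁻¹) • g'‖
        ≤ ‖a⁻¹ • (g' - g)‖ + ‖(a'⁻¹ - a⁻¹) • g'‖ := norm_add_le _ _
      _ = a⁻¹ * ‖g' - g‖ + |a'⁻¹ - a⁻¹| * a' := by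
          rw [norm_smul, norm_smul, Real.norm_eq_abs, Real.norm_eq_abs,
            abs_of_pos (inv_pos.2 ha), ← hag']
  have h2 : |a'⁻¹ - a⁻¹| * a' = |a - a'| / a := by
    have h : (a'⁻¹ - a⁻¹) * a' = (a - a') / a := by field_simp
    calc |a'⁻¹ - a⁻¹| * a' = |(a'⁻¹ - a⁻¹) * a'| := by rw [abs_mul, abs_of_pos ha']
      _ = |a - a'| / a := by rw [h, abs_div, abs_of_pos ha]
  have h3 : |a - a'| ≤ ‖g' - g‖ := by
    rw [hag, hag']
    calc |‖g‖ - ‖g'‖| ≤ ‖g - g'‖ := abs_norm_sub_norm_le g g'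
      _ = ‖g' - g‖ := norm_sub_rev _ _
  calc ‖u' - u‖ ≤ a⁻¹ * ‖g' - g‖ + |a - a'| / a := by rw [← h2]; exact h1
    _ ≤ a⁻¹ * ‖g' - g‖ + ‖g' - g‖ / a := by gcongr
    _ = 2 * ‖g' - g‖ / a := by field_simp; ring

/-- Splitting bound for the GKB recurrence differences. -/
private lemma diff_bound {E F : Type*} [NormedAddCommGroup E] [NormedAddCommGroup F]
    [NormedSpace ℝ E] [NormedSpace ℝ F] (T : E →L[ℝ] F) (x x' : E) (b b' : ℝ) (u u' : F)
    (hu' : ‖u'‖ = 1) :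
    ‖(T x' - b' • u') - (T x - b • u)‖ ≤ ‖T‖ * ‖x' - x‖ + |b' - b| + |b| * ‖u' - u‖ := by
  have hsplit : (T x' - b' • u') - (T x - b • u)
      = T (x' - x) - ((b' - b) • u' + b • (u' - u)) := by
    rw [map_sub, sub_smul, smul_sub]; abel
  rw [hsplit]
  calc ‖T (x' - x) - ((b' - b) • u' + b • (u' - u))‖
      ≤ ‖T (x' - x)‖ + ‖(b' - b) • u' + b • (u' - u)‖ := norm_sub_le _ _
    _ ≤ ‖T (x' - x)‖ + (‖(b' - b) • u'‖ + ‖b • (u' - u)‖) := by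
        gcongr; exact norm_add_le _ _
    _ ≤ ‖T‖ * ‖x' - x‖ + |b' - b| + |b| * ‖u' - u‖ := by
        rw [norm_smul, norm_smul, Real.norm_eq_abs, Real.norm_eq_abs, hu', mul_one]
        have := T.le_opNorm (x' - x)
        linarith

variable {H₁ H₂ : Type*}
    [NormedAddCommGroup H₁] [InnerProductSpace ℝ H₁] [CompleteSpace H₁]
    [NormedAddCommGroup H₂] [InnerProductSpace ℝ H₂] [CompleteSpace H₂]
    {K : H₁ →L[ℝ] H₂} {g : H₂} {γ β : ℕ → ℝ} {v : ℕ → H₂} {p : ℕ → H₁}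

lemma GKB.norm_v (hG : GKB K g γ β v p) (j : ℕ) : ‖v j‖ = 1 := by
  have hpos := hG.γ_pos j
  have key : γ j * ‖v j‖ = γ j := by
    cases j with
    | zero =>
      have := congrArg norm hG.v_zero
      rwa [norm_smul, Real.norm_eq_abs, abs_of_pos hpos, ← hG.γ_zero] at this
    | succ n =>
      have := congrArg norm (hG.v_succ n)
      rwa [norm_smul, Real.norm_eq_abs, abs_of_pos hpos, ← hG.γ_succ n] at this
  exact mul_left_cancel₀ hpos.ne' (key.trans (mul_one _).symm)

lemma GKB.norm_p (hG : GKB K g γ β v p) (j : ℕ) : ‖p j‖ = 1 := by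
  have hpos := hG.β_pos j
  have key : β j * ‖p j‖ = β j := by
    cases j with
    | zero =>
      have := congrArg norm hG.p_zero
      rwa [norm_smul, Real.norm_eq_abs, abs_of_pos hpos, ← hG.β_zero] at this
    | succ n =>
      have := congrArg norm (hG.p_succ n)
      rwa [norm_smul, Real.norm_eq_abs, abs_of_pos hpos, ← hG.β_succ n] at this
  exact mul_left_cancel₀ hpos.ne' (key.trans (mul_one _).symm)

/-- `K* v (j+1) = β (j+1) • p (j+1) + γ (j+1) • p j`. -/
lemma GKB.adj_eq (hG : GKB K g γ β v p) (j : ℕ) :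
    adjoint K (v (j + 1)) = β (j + 1) • p (j + 1) + γ (j + 1) • p j := by
  rw [hG.p_succ j]; abel

/-- `K p j = γ (j+1) • v (j+1) + β j • v j`. -/
lemma GKB.apply_eq (hG : GKB K g γ β v p) (j : ℕ) :
    K (p j) = γ (j + 1) • v (j + 1) + β j • v j := by
  rw [hG.v_succ j]; abel

/-- orthogonality of consecutive vectors. -/
lemma GKB.orth (hG : GKB K g γ β v p) (j : ℕ) :
    ⟪v (j + 1), v j⟫ = 0 ∧ ⟪p (j + 1), p j⟫ = 0 := by
  have hA : ∀ i, ⟪v (i + 1), v i⟫ = 0 → ⟪p (i + 1), p i⟫ = 0 := by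
    intro i hvi
    have h1 : β (i + 1) * ⟪p (i + 1), p i⟫
        = ⟪adjoint K (v (i + 1)) - γ (i + 1) • p i, p i⟫ := by
      rw [← hG.p_succ i, real_inner_smul_left]
    have h2 : ⟪adjoint K (v (i + 1)) - γ (i + 1) • p i, p i⟫ = 0 := by
      rw [inner_sub_left, real_inner_smul_left, real_inner_self_eq_norm_sq, hG.norm_p i,
        adjoint_inner_left, hG.apply_eq i, inner_add_right, real_inner_smul_right,
        real_inner_smul_right, real_inner_self_eq_norm_sq, hG.norm_v (i + 1), hvi]
      ring
    exact (mul_eq_zero.1 (h1.trans h2)).resolve_left (hG.β_pos (i + 1)).ne'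
  induction j with
  | zero =>
    have hv : ⟪v 1, v 0⟫ = 0 := by
      have h1 : γ 1 * ⟪v 1, v 0⟫ = ⟪K (p 0) - β 0 • v 0, v 0⟫ := by
        rw [← hG.v_succ 0, real_inner_smul_left]
      have h2 : ⟪K (p 0) - β 0 • v 0, v 0⟫ = 0 := by
        rw [inner_sub_left, real_inner_smul_left, real_inner_self_eq_norm_sq, hG.norm_v 0,
          ← adjoint_inner_right, ← hG.p_zero, real_inner_smul_right,
          real_inner_self_eq_norm_sq, hG.norm_p 0]
        ring
      exact (mul_eq_zero.1 (h1.trans h2)).resolve_left (hG.γ_pos 1).ne'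
    exact ⟨hv, hA 0 hv⟩
  | succ n ih =>
    have hp : ⟪p (n + 1), p n⟫ = 0 := ih.2
    have hv : ⟪v (n + 2), v (n + 1)⟫ = 0 := by
      have h1 : γ (n + 2) * ⟪v (n + 2), v (n + 1)⟫
          = ⟪K (p (n + 1)) - β (n + 1) • v (n + 1), v (n + 1)⟫ := by
        rw [← hG.v_succ (n + 1), real_inner_smul_left]
      have h2 : ⟪K (p (n + 1)) - β (n + 1) • v (n + 1), v (n + 1)⟫ = 0 := by
        rw [inner_sub_left, real_inner_smul_left, real_inner_self_eq_norm_sq, hG.norm_v (n + 1),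
          ← adjoint_inner_right, hG.adj_eq n, inner_add_right, real_inner_smul_right,
          real_inner_smul_right, real_inner_self_eq_norm_sq, hG.norm_p (n + 1), hp]
        ring
      exact (mul_eq_zero.1 (h1.trans h2)).resolve_left (hG.γ_pos (n + 2)).ne'
    exact ⟨hv, hA (n + 1) hv⟩

lemma GKB.γ_le (hG : GKB K g γ β v p) (j : ℕ) : γ (j + 1) ≤ ‖K‖ := by
  have horth := (hG.orth j).1
  have h : γ (j + 1) = ⟪K (p j), v (j + 1)⟫ := by
    rw [hG.apply_eq j, inner_add_left, real_inner_smul_left, real_inner_smul_left,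
      real_inner_self_eq_norm_sq, hG.norm_v (j + 1), real_inner_comm (v (j + 1)) (v j), horth]
    ring
  calc γ (j + 1) = ⟪K (p j), v (j + 1)⟫ := h
    _ ≤ ‖K (p j)‖ * ‖v (j + 1)‖ := real_inner_le_norm _ _
    _ ≤ ‖K‖ * ‖p j‖ * ‖v (j + 1)‖ := by gcongr; exact K.le_opNorm _
    _ = ‖K‖ := by rw [hG.norm_p j, hG.norm_v (j + 1)]; ring

lemma GKB.β_le (hG : GKB K g γ β v p) (j : ℕ) : β j ≤ ‖K‖ := by
  have hadj : ∀ x : H₂, ‖adjoint K x‖ ≤ ‖K‖ * ‖x‖ := fun x =>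
    le_of_le_of_eq ((adjoint K).le_opNorm x) (by rw [adjoint.norm_map K])
  cases j with
  | zero =>
    calc β 0 = ‖adjoint K (v 0)‖ := hG.β_zero
      _ ≤ ‖K‖ * ‖v 0‖ := hadj _
      _ = ‖K‖ := by rw [hG.norm_v 0]; ring
  | succ n =>
    have horth := (hG.orth n).2
    have h : β (n + 1) = ⟪adjoint K (v (n + 1)), p (n + 1)⟫ := by
      rw [hG.adj_eq n, inner_add_left, real_inner_smul_left, real_inner_smul_left,
        real_inner_self_eq_norm_sq, hG.norm_p (n + 1),
        real_inner_comm (p (n + 1)) (p n), horth]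
      ring
    calc β (n + 1) = ⟪adjoint K (v (n + 1)), p (n + 1)⟫ := h
      _ ≤ ‖adjoint K (v (n + 1))‖ * ‖p (n + 1)‖ := real_inner_le_norm _ _
      _ ≤ ‖K‖ * ‖v (n + 1)‖ * ‖p (n + 1)‖ := by gcongr; exact hadj _
      _ = ‖K‖ := by rw [hG.norm_v (n + 1), hG.norm_p (n + 1)]; ring

end Helpers

set_option maxHeartbeats 2000000 in
/-- stability of the GKB process under perturbation of the data. With
`0`-based indexing, index `k : ℕ` corresponds to the paper's step `k+1`, so the lower
bound reads `min (γ k) (β k) ≥ C₃·(k+1)^{−θ}` and the conclusion involves `(k+1)!`. -/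
theorem stmt_14
    {H₁ H₂ : Type*}
    [NormedAddCommGroup H₁] [InnerProductSpace ℝ H₁] [CompleteSpace H₁]
    [NormedAddCommGroup H₂] [InnerProductSpace ℝ H₂] [CompleteSpace H₂]
    (K : H₁ →L[ℝ] H₂) (f : H₂) (hf : f ≠ 0)
    (C_f C₃ θ : ℝ) (hCf : 0 < C_f) (hC₃ : 0 < C₃) (hθ0 : 0 < θ) (hθ : θ < 1 / 2)
    (γ β : ℕ → ℝ) (v : ℕ → H₂) (p : ℕ → H₁)
    (hGKB : GKB K f γ β v p)
    (hlow : ∀ k : ℕ, C₃ * ((k : ℝ) + 1) ^ (-θ) ≤ min (γ k) (β k)) :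
    ∃ C₄ : ℝ, 0 < C₄ ∧
      ∀ δ : ℝ, 0 < δ → ∀ fδ : H₂, ‖fδ - f‖ ≤ C_f * δ →
        ∀ (γδ βδ : ℕ → ℝ) (vδ : ℕ → H₂) (pδ : ℕ → H₁),
          GKB K fδ γδ βδ vδ pδ →
          ∀ k : ℕ,
            |γδ k - γ k| + ‖vδ k - v k‖ + |βδ k - β k| + ‖pδ k - p k‖ ≤
              C₄ * (Nat.factorial (k + 1)) * δ := by
  classical
  have hadj : ∀ x : H₂, ‖adjoint K x‖ ≤ ‖K‖ * ‖x‖ := fun x =>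
    le_of_le_of_eq ((adjoint K).le_opNorm x) (by rw [adjoint.norm_map K])
  set R : ℝ := ‖K‖ + 1 with hRdef
  have hR1 : (1 : ℝ) ≤ R := le_add_of_nonneg_left (norm_nonneg K)
  have hR0 : (0 : ℝ) < R := lt_of_lt_of_le one_pos hR1
  have hMR : ‖K‖ ≤ R := by rw [hRdef]; linarith
  -- lower bounds in the convenient form
  have hpow : ∀ k : ℕ, C₃ / ((k : ℝ) + 1) ^ θ ≤ γ k ∧ C₃ / ((k : ℝ) + 1) ^ θ ≤ β k := by
    intro k
    have h := hlow k
    have hx : (0 : ℝ) < (k : ℝ) + 1 := by positivity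
    rw [Real.rpow_neg hx.le, ← div_eq_mul_inv] at h
    exact ⟨h.trans (min_le_left _ _), h.trans (min_le_right _ _)⟩
  have key : ∀ a t X : ℝ, 0 < t → 0 ≤ X → C₃ / t ≤ a → 2 * X / a ≤ 2 / C₃ * t * X := by
    intro a t X ht hX ha
    have ha0 : 0 < a := lt_of_lt_of_le (div_pos hC₃ ht) ha
    have h1 : 1 / a ≤ t / C₃ := by
      rw [div_le_div_iff₀ ha0 hC₃]
      rw [div_le_iff₀ ht] at ha
      linarith
    calc 2 * X / a = 2 * X * (1 / a) := by ring
      _ ≤ 2 * X * (t / C₃) := by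
          apply mul_le_mul_of_nonneg_left h1 (by positivity)
      _ = 2 / C₃ * t * X := by ring
  -- constants
  set c : ℕ → ℝ := fun j => 1 + 2 / C₃ * ((j : ℝ) + 2) ^ θ with hcdef
  have hc1 : ∀ j, 1 ≤ c j := by
    intro j
    have : (0 : ℝ) ≤ 2 / C₃ * ((j : ℝ) + 2) ^ θ := by positivity
    simp only [hcdef]; linarith
  have hc0 : ∀ j, 0 ≤ c j := fun j => le_trans zero_le_one (hc1 j)
  set F : ℕ → ℝ := fun j => (c j * R + 1) ^ 2 with hFdef
  have hF1 : ∀ j, 1 ≤ F j := by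
    intro j
    have h1 : (1 : ℝ) ≤ c j * R + 1 := by nlinarith [hc1 j, hR1]
    simp only [hFdef]
    nlinarith [h1]
  have hF0 : ∀ j, 0 ≤ F j := fun j => le_trans zero_le_one (hF1 j)
  set C₀ : ℝ := (1 + (1 + 2 / C₃) * R) * ((1 + 2 / C₃) * C_f) with hC₀def
  have hC₀pos : 0 < C₀ := by positivity
  set B : ℝ := (2 * R * (1 + 1 / C₃)) ^ 2 with hBdef
  -- F j ≤ B * ((j+2)^θ)^2
  have hFB : ∀ j : ℕ, F j ≤ B * (((j : ℝ) + 2) ^ θ) ^ 2 := by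
    intro j
    have hx : (1 : ℝ) ≤ (j : ℝ) + 2 := by
      have : (0 : ℝ) ≤ (j : ℝ) := Nat.cast_nonneg j
      linarith
    have ht1 : (1 : ℝ) ≤ ((j : ℝ) + 2) ^ θ := Real.one_le_rpow hx hθ0.le
    have h1 : c j * R + 1 ≤ 2 * R * (1 + 1 / C₃) * ((j : ℝ) + 2) ^ θ := by
      show (1 + 2 / C₃ * ((j : ℝ) + 2) ^ θ) * R + 1 ≤ 2 * R * (1 + 1 / C₃) * ((j : ℝ) + 2) ^ θ
      have e1 : (0:ℝ) ≤ 2 * R * (((j : ℝ) + 2) ^ θ - 1) :=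
        mul_nonneg (by positivity) (by linarith)
      have e2 : 2 * R * (1 + 1 / C₃) * ((j : ℝ) + 2) ^ θ
          = 2 * R * ((j : ℝ) + 2) ^ θ + 2 / C₃ * ((j : ℝ) + 2) ^ θ * R := by
        field_simp
      rw [e2]
      nlinarith [hR1, e1]
    have h0 : (0 : ℝ) ≤ c j * R + 1 := by positivity
    calc F j = (c j * R + 1) ^ 2 := by simp only [hFdef]
      _ ≤ (2 * R * (1 + 1 / C₃) * ((j : ℝ) + 2) ^ θ) ^ 2 := by gcongr
      _ = B * (((j : ℝ) + 2) ^ θ) ^ 2 := by rw [hBdef, mul_pow]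
  -- eventually F j ≤ j + 2
  obtain ⟨N, hN⟩ : ∃ N : ℕ, ∀ j ≥ N, B ≤ ((j : ℝ) + 2) ^ (1 - 2 * θ) := by
    have htend : Filter.Tendsto (fun j : ℕ => ((j : ℝ) + 2) ^ (1 - 2 * θ))
        Filter.atTop Filter.atTop := by
      apply (tendsto_rpow_atTop (by linarith)).comp
      exact Filter.tendsto_atTop_add_const_right _ 2 tendsto_natCast_atTop_atTop
    exact Filter.eventually_atTop.mp (htend.eventually_ge_atTop B)
  have hFle : ∀ j : ℕ, N ≤ j → F j ≤ (j : ℝ) + 2 := by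
    intro j hj
    have hx : (0 : ℝ) < (j : ℝ) + 2 := by positivity
    have h1 : F j ≤ ((j : ℝ) + 2) ^ (1 - 2 * θ) * (((j : ℝ) + 2) ^ θ) ^ 2 := by
      calc F j ≤ B * (((j : ℝ) + 2) ^ θ) ^ 2 := hFB j
        _ ≤ ((j : ℝ) + 2) ^ (1 - 2 * θ) * (((j : ℝ) + 2) ^ θ) ^ 2 :=
            mul_le_mul_of_nonneg_right (hN j hj) (by positivity)
    have h2 : ((j : ℝ) + 2) ^ (1 - 2 * θ) * (((j : ℝ) + 2) ^ θ) ^ 2 = (j : ℝ) + 2 := by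
      rw [sq, ← mul_assoc, ← Real.rpow_add hx, ← Real.rpow_add hx]
      have he : 1 - 2 * θ + θ + θ = 1 := by ring
      rw [he, Real.rpow_one]
    rw [h2] at h1
    exact h1
  -- the recursive majorant
  set E : ℕ → ℝ := fun n => Nat.rec C₀ (fun k Ek => F k * Ek) n with hEdef
  have hE0 : E 0 = C₀ := rfl
  have hES : ∀ k, E (k + 1) = F k * E k := fun _ => rfl
  have hEpos : ∀ k, 0 < E k := by
    intro k
    induction k with
    | zero => exact hC₀pos
    | succ n ih =>
      rw [hES n]
      exact mul_pos (lt_of_lt_of_le one_pos (hF1 n)) ih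
  have hEmono : Monotone E := by
    apply monotone_nat_of_le_succ
    intro n
    rw [hES n]
    nlinarith [hEpos n, hF1 n]
  have hEfact : ∀ k, E k ≤ E N * (Nat.factorial (k + 1) : ℝ) := by
    intro k
    induction k with
    | zero =>
      have h1 : E 0 ≤ E N := hEmono (Nat.zero_le N)
      simpa using h1
    | succ n ih =>
      rcases le_or_gt N n with hNn | hnN
      · -- N ≤ n : use the factorial step
        have hstep : F n ≤ (n : ℝ) + 2 := hFle n hNn
        calc E (n + 1) = F n * E n := hES n
          _ ≤ ((n : ℝ) + 2) * (E N * (Nat.factorial (n + 1) : ℝ)) := by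
              apply mul_le_mul hstep ih (le_of_lt (hEpos n))
              positivity
          _ = E N * (Nat.factorial (n + 2) : ℝ) := by
              rw [Nat.factorial_succ (n + 1)]
              push_cast
              ring
      · -- n + 1 ≤ N : use monotonicity
        have h1 : E (n + 1) ≤ E N := hEmono hnN
        have h2 : (1 : ℝ) ≤ (Nat.factorial (n + 2) : ℝ) := by
          exact_mod_cast Nat.one_le_iff_ne_zero.mpr (Nat.factorial_pos (n + 2)).ne'
        nlinarith [hEpos N]
  refine ⟨E N, hEpos N, ?_⟩
  intro δ hδ fδ hfδ γδ βδ vδ pδ hG' k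
  have hs0 : (0 : ℝ) ≤ ‖fδ - f‖ := norm_nonneg _
  -- the main induction
  have main : ∀ k : ℕ,
      |γδ k - γ k| + ‖vδ k - v k‖ + |βδ k - β k| + ‖pδ k - p k‖ ≤ E k * δ := by
    intro k
    induction k with
    | zero =>
      have hγ0C : C₃ ≤ γ 0 := by
        have := (hpow 0).1
        simpa using this
      have hβ0C : C₃ ≤ β 0 := by
        have := (hpow 0).2
        simpa using this
      have e1 : |γδ 0 - γ 0| ≤ ‖fδ - f‖ := by
        rw [hG'.γ_zero, hGKB.γ_zero]; exact abs_norm_sub_norm_le fδ f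
      have e2 : ‖vδ 0 - v 0‖ ≤ 2 * ‖fδ - f‖ / γ 0 :=
        unit_diff (hGKB.γ_pos 0) (hG'.γ_pos 0) hGKB.γ_zero hG'.γ_zero hGKB.v_zero hG'.v_zero
      have e2' : 2 * ‖fδ - f‖ / γ 0 ≤ 2 / C₃ * 1 * ‖fδ - f‖ :=
        key (γ 0) 1 ‖fδ - f‖ one_pos hs0 (by rw [div_one]; exact hγ0C)
      have hX : ‖adjoint K (vδ 0) - adjoint K (v 0)‖ ≤ ‖K‖ * ‖vδ 0 - v 0‖ := by
        rw [← map_sub]; exact hadj _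
      have e3 : |βδ 0 - β 0| ≤ ‖adjoint K (vδ 0) - adjoint K (v 0)‖ := by
        rw [hG'.β_zero, hGKB.β_zero]; exact abs_norm_sub_norm_le _ _
      have e4 : ‖pδ 0 - p 0‖ ≤ 2 * ‖adjoint K (vδ 0) - adjoint K (v 0)‖ / β 0 :=
        unit_diff (hGKB.β_pos 0) (hG'.β_pos 0) hGKB.β_zero hG'.β_zero hGKB.p_zero hG'.p_zero
      have e4' : 2 * ‖adjoint K (vδ 0) - adjoint K (v 0)‖ / β 0
          ≤ 2 / C₃ * 1 * ‖adjoint K (vδ 0) - adjoint K (v 0)‖ :=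
        key (β 0) 1 _ one_pos (norm_nonneg _) (by rw [div_one]; exact hβ0C)
      -- combine
      have hDv : |γδ 0 - γ 0| + ‖vδ 0 - v 0‖ ≤ (1 + 2 / C₃) * ‖fδ - f‖ := by
        have := e2.trans e2'
        nlinarith [e1]
      have hXb : ‖adjoint K (vδ 0) - adjoint K (v 0)‖
          ≤ R * ((1 + 2 / C₃) * ‖fδ - f‖) := by
        have h1 : ‖vδ 0 - v 0‖ ≤ (1 + 2 / C₃) * ‖fδ - f‖ := by
          have := abs_nonneg (γδ 0 - γ 0); linarith [hDv]
        calc ‖adjoint K (vδ 0) - adjoint K (v 0)‖ ≤ ‖K‖ * ‖vδ 0 - v 0‖ := hX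
          _ ≤ R * ((1 + 2 / C₃) * ‖fδ - f‖) := by
              apply mul_le_mul hMR h1 (norm_nonneg _) (le_of_lt hR0)
      have hDp : |βδ 0 - β 0| + ‖pδ 0 - p 0‖
          ≤ (1 + 2 / C₃) * (R * ((1 + 2 / C₃) * ‖fδ - f‖)) := by
        have h1 := e4.trans e4'
        have h2 : |βδ 0 - β 0| + ‖pδ 0 - p 0‖
            ≤ (1 + 2 / C₃) * ‖adjoint K (vδ 0) - adjoint K (v 0)‖ := by
          nlinarith [e3, h1]
        calc |βδ 0 - β 0| + ‖pδ 0 - p 0‖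
            ≤ (1 + 2 / C₃) * ‖adjoint K (vδ 0) - adjoint K (v 0)‖ := h2
          _ ≤ (1 + 2 / C₃) * (R * ((1 + 2 / C₃) * ‖fδ - f‖)) := by
              apply mul_le_mul_of_nonneg_left hXb (by positivity)
      have hsum : |γδ 0 - γ 0| + ‖vδ 0 - v 0‖ + |βδ 0 - β 0| + ‖pδ 0 - p 0‖
          ≤ (1 + (1 + 2 / C₃) * R) * ((1 + 2 / C₃) * ‖fδ - f‖) := by
        nlinarith [hDv, hDp]
      have hfinal : (1 + (1 + 2 / C₃) * R) * ((1 + 2 / C₃) * ‖fδ - f‖) ≤ C₀ * δ := by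
        rw [hC₀def]
        have h1 : (1 + 2 / C₃) * ‖fδ - f‖ ≤ (1 + 2 / C₃) * (C_f * δ) :=
          mul_le_mul_of_nonneg_left hfδ (by positivity)
        calc (1 + (1 + 2 / C₃) * R) * ((1 + 2 / C₃) * ‖fδ - f‖)
            ≤ (1 + (1 + 2 / C₃) * R) * ((1 + 2 / C₃) * (C_f * δ)) := by
              apply mul_le_mul_of_nonneg_left h1 (by positivity)
          _ = (1 + (1 + 2 / C₃) * R) * ((1 + 2 / C₃) * C_f) * δ := by ring
      rw [hE0]
      exact hsum.trans hfinal
    | succ k ih =>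
      have hx2 : (0 : ℝ) < (k : ℝ) + 2 := by positivity
      have htpos : (0 : ℝ) < ((k : ℝ) + 2) ^ θ := Real.rpow_pos_of_pos hx2 θ
      have hγlow' : C₃ / ((k : ℝ) + 2) ^ θ ≤ γ (k + 1) := by
        have h := (hpow (k + 1)).1
        have hcast : ((k + 1 : ℕ) : ℝ) + 1 = (k : ℝ) + 2 := by push_cast; ring
        rwa [hcast] at h
      have hβlow' : C₃ / ((k : ℝ) + 2) ^ θ ≤ β (k + 1) := by
        have h := (hpow (k + 1)).2
        have hcast : ((k + 1 : ℕ) : ℝ) + 1 = (k : ℝ) + 2 := by push_cast; ring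
        rwa [hcast] at h
      set A := |γδ k - γ k| + ‖vδ k - v k‖ + |βδ k - β k| + ‖pδ k - p k‖ with hAdef
      have hA0 : 0 ≤ A := by
        rw [hAdef]
        positivity
      set q := ‖(K (pδ k) - βδ k • vδ k) - (K (p k) - β k • v k)‖ with hqdef
      have hq0 : 0 ≤ q := norm_nonneg _
      -- bound on q
      have hq : q ≤ R * A := by
        have hg := diff_bound K (p k) (pδ k) (β k) (βδ k) (v k) (vδ k) (hG'.norm_v k)
        have hβabs : |β k| = β k := abs_of_pos (hGKB.β_pos k)
        rw [hβabs] at hg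
        have hβR : β k ≤ R := (hGKB.β_le k).trans hMR
        have n1 : (0 : ℝ) ≤ ‖vδ k - v k‖ := norm_nonneg _
        have n2 : (0 : ℝ) ≤ ‖pδ k - p k‖ := norm_nonneg _
        have n3 : (0 : ℝ) ≤ |γδ k - γ k| := abs_nonneg _
        have n4 : (0 : ℝ) ≤ |βδ k - β k| := abs_nonneg _
        have m1 : ‖K‖ * ‖pδ k - p k‖ ≤ R * ‖pδ k - p k‖ :=
          mul_le_mul_of_nonneg_right hMR n2
        have m2 : β k * ‖vδ k - v k‖ ≤ R * ‖vδ k - v k‖ :=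
          mul_le_mul_of_nonneg_right hβR n1
        have m3 : |βδ k - β k| ≤ R * |βδ k - β k| := by nlinarith [hR1]
        rw [hqdef, hAdef]
        nlinarith [hg, m1, m2, m3, mul_nonneg hR0.le n1, mul_nonneg hR0.le n3,
          mul_nonneg hR0.le n4]
      -- first half of the step
      have hb1 : |γδ (k + 1) - γ (k + 1)| ≤ q := by
        rw [hGKB.γ_succ k, hG'.γ_succ k, hqdef]
        exact abs_norm_sub_norm_le _ _
      have hb2 : ‖vδ (k + 1) - v (k + 1)‖ ≤ 2 * q / γ (k + 1) :=
        unit_diff (hGKB.γ_pos (k + 1)) (hG'.γ_pos (k + 1)) (hGKB.γ_succ k) (hG'.γ_succ k)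
          (hGKB.v_succ k) (hG'.v_succ k)
      have hb2' : 2 * q / γ (k + 1) ≤ 2 / C₃ * ((k : ℝ) + 2) ^ θ * q :=
        key (γ (k + 1)) (((k : ℝ) + 2) ^ θ) q htpos hq0 hγlow'
      have s1 : |γδ (k + 1) - γ (k + 1)| + ‖vδ (k + 1) - v (k + 1)‖ ≤ c k * q := by
        have h := hb2.trans hb2'
        simp only [hcdef]
        nlinarith [hb1]
      -- second half of the step
      set H := ‖(adjoint K (vδ (k + 1)) - γδ (k + 1) • pδ k)
          - (adjoint K (v (k + 1)) - γ (k + 1) • p k)‖ with hHdef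
      have hH0 : 0 ≤ H := norm_nonneg _
      have hH : H ≤ R * (|γδ (k + 1) - γ (k + 1)| + ‖vδ (k + 1) - v (k + 1)‖) + R * A := by
        have hh := diff_bound (adjoint K) (v (k + 1)) (vδ (k + 1)) (γ (k + 1)) (γδ (k + 1))
          (p k) (pδ k) (hG'.norm_p k)
        rw [adjoint.norm_map K] at hh
        have hγabs : |γ (k + 1)| = γ (k + 1) := abs_of_pos (hGKB.γ_pos (k + 1))
        rw [hγabs] at hh
        have hγR : γ (k + 1) ≤ R := (hGKB.γ_le k).trans hMR
        have n1 : (0 : ℝ) ≤ ‖vδ (k + 1) - v (k + 1)‖ := norm_nonneg _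
        have n2 : (0 : ℝ) ≤ ‖pδ k - p k‖ := norm_nonneg _
        have n3 : (0 : ℝ) ≤ |γδ (k + 1) - γ (k + 1)| := abs_nonneg _
        have m1 : ‖K‖ * ‖vδ (k + 1) - v (k + 1)‖ ≤ R * ‖vδ (k + 1) - v (k + 1)‖ :=
          mul_le_mul_of_nonneg_right hMR n1
        have m2 : γ (k + 1) * ‖pδ k - p k‖ ≤ R * ‖pδ k - p k‖ :=
          mul_le_mul_of_nonneg_right hγR n2
        have m3 : |γδ (k + 1) - γ (k + 1)| ≤ R * |γδ (k + 1) - γ (k + 1)| := by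
          nlinarith [hR1]
        have hApart : ‖pδ k - p k‖ ≤ A := by
          rw [hAdef]
          have := abs_nonneg (γδ k - γ k)
          have := norm_nonneg (vδ k - v k)
          have := abs_nonneg (βδ k - β k)
          linarith
        have m4 : R * ‖pδ k - p k‖ ≤ R * A := mul_le_mul_of_nonneg_left hApart hR0.le
        rw [hHdef]
        linarith [hh, m1, m2, m3, m4]
      have hb3 : |βδ (k + 1) - β (k + 1)| ≤ H := by
        rw [hGKB.β_succ k, hG'.β_succ k, hHdef]
        exact abs_norm_sub_norm_le _ _
      have hb4 : ‖pδ (k + 1) - p (k + 1)‖ ≤ 2 * H / β (k + 1) :=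
        unit_diff (hGKB.β_pos (k + 1)) (hG'.β_pos (k + 1)) (hGKB.β_succ k) (hG'.β_succ k)
          (hGKB.p_succ k) (hG'.p_succ k)
      have hb4' : 2 * H / β (k + 1) ≤ 2 / C₃ * ((k : ℝ) + 2) ^ θ * H :=
        key (β (k + 1)) (((k : ℝ) + 2) ^ θ) H htpos hH0 hβlow'
      have s2 : |βδ (k + 1) - β (k + 1)| + ‖pδ (k + 1) - p (k + 1)‖ ≤ c k * H := by
        have h := hb4.trans hb4'
        simp only [hcdef]
        nlinarith [hb3]
      -- combine the two halves
      have u1 : |γδ (k + 1) - γ (k + 1)| + ‖vδ (k + 1) - v (k + 1)‖ ≤ c k * (R * A) :=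
        s1.trans (mul_le_mul_of_nonneg_left hq (hc0 k))
      have u2 : H ≤ R * (c k * (R * A)) + R * A := by
        calc H ≤ R * (|γδ (k + 1) - γ (k + 1)| + ‖vδ (k + 1) - v (k + 1)‖) + R * A := hH
          _ ≤ R * (c k * (R * A)) + R * A := by
              have := mul_le_mul_of_nonneg_left u1 hR0.le
              linarith
      have u3 : |βδ (k + 1) - β (k + 1)| + ‖pδ (k + 1) - p (k + 1)‖
          ≤ c k * (R * (c k * (R * A)) + R * A) :=
        s2.trans (mul_le_mul_of_nonneg_left u2 (hc0 k))
      have hDk1 : |γδ (k + 1) - γ (k + 1)| + ‖vδ (k + 1) - v (k + 1)‖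
          + |βδ (k + 1) - β (k + 1)| + ‖pδ (k + 1) - p (k + 1)‖ ≤ F k * A := by
        have hFkA : c k * (R * A) + c k * (R * (c k * (R * A)) + R * A) ≤ F k * A := by
          simp only [hFdef]
          nlinarith [hA0, hc0 k, hR0.le, mul_nonneg (hc0 k) hR0.le]
        linarith [u1, u3]
      calc |γδ (k + 1) - γ (k + 1)| + ‖vδ (k + 1) - v (k + 1)‖
          + |βδ (k + 1) - β (k + 1)| + ‖pδ (k + 1) - p (k + 1)‖
          ≤ F k * A := hDk1
        _ ≤ F k * (E k * δ) := mul_le_mul_of_nonneg_left ih (hF0 k)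
        _ = E (k + 1) * δ := by rw [hES k]; ring
  -- conclude
  calc |γδ k - γ k| + ‖vδ k - v k‖ + |βδ k - β k| + ‖pδ k - p k‖
      ≤ E k * δ := main k
    _ ≤ E N * (Nat.factorial (k + 1) : ℝ) * δ :=
        mul_le_mul_of_nonneg_right (hEfact k) hδ.le
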